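/- lim_{n→∞} V_n / V_{n-1} = α for the k-generalized Horadam-like sequence, where α ∈ (q_1, q_1 + 1) is the unique positive real root of x^k − q_1 x^{k-1} − ⋯ − q_k, assuming q_1 ≥ q_2 ≥ ⋯ ≥ q_k ≥ 1. -/

import Mathlib

open Filter

/-- The ratio of successive `k`-generalized Horadam-like numbers converges to the
unique positive real root `α ∈ (q 1, q 1 + 1)` of `x^k - q 1 x^(k-1) - ⋯ - q k`. -/
theorem kgen_horadam_like_ratio_tendsto
    (k : ℕ) (hk : 2 ≤ k) (q : ℕ → ℤ)
    (hq1 : ∀ i ∈ Finset.Icc 1 k, 1 ≤ q i)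
    (hqmono : ∀ i j, 1 ≤ i → i ≤ j → j ≤ k → q j ≤ q i)
    (V : ℕ → ℤ)
    (hVinit : ∀ i < k, 0 ≤ V i) (hVne : ∃ i < k, V i ≠ 0)
    (hVrec : ∀ n ≥ k, V n = ∑ i ∈ Finset.Icc 1 k, q i * V (n - i))
    (α : ℝ) (hαlb : (q 1 : ℝ) < α) (hαub : α < (q 1 : ℝ) + 1)
    (hαroot : α ^ k - ∑ i ∈ Finset.Icc 1 k, (q i : ℝ) * α ^ (k - i) = 0) :
    Tendsto (fun n => (V n : ℝ) / (V (n - 1) : ℝ)) atTop (nhds α) := by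
  have hq1' : (1 : ℤ) ≤ q 1 := hq1 1 (Finset.mem_Icc.mpr ⟨le_rfl, by omega⟩)
  have hα1 : (1 : ℝ) < α := lt_of_le_of_lt (by exact_mod_cast hq1') hαlb
  have hα0 : (0 : ℝ) < α := by linarith
  -- nonnegativity of V
  have hVnonneg : ∀ n, 0 ≤ V n := by
    intro n
    induction n using Nat.strong_induction_on with
    | _ n ih =>
      by_cases h : n < k
      · exact hVinit n h
      · push_neg at h
        rw [hVrec n h]
        apply Finset.sum_nonneg
        intro i hi
        have hi' := Finset.mem_Icc.mp hi
        have hqi := hq1 i hi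
        exact mul_nonneg (by linarith) (ih (n - i) (by omega))
  -- weak monotonicity
  have hVmono : ∀ n, k ≤ n → V (n - 1) ≤ V n := by
    intro n hn
    rw [hVrec n hn]
    calc V (n - 1) = 1 * V (n - 1) := (one_mul _).symm
      _ ≤ q 1 * V (n - 1) := mul_le_mul_of_nonneg_right hq1' (hVnonneg _)
      _ ≤ ∑ i ∈ Finset.Icc 1 k, q i * V (n - i) := by
          apply Finset.single_le_sum (f := fun i => q i * V (n - i))
          · intro i hi
            have hqi := hq1 i hi
            exact mul_nonneg (by linarith) (hVnonneg _)
          · exact Finset.mem_Icc.mpr ⟨le_rfl, by omega⟩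
  have hVmono' : ∀ a b, k - 1 ≤ a → a ≤ b → V a ≤ V b := by
    intro a b ha hab
    obtain ⟨d, rfl⟩ := Nat.exists_eq_add_of_le hab
    clear hab
    induction d with
    | zero => simp
    | succ d ih =>
      refine le_trans ih ?_
      have := hVmono (a + d + 1) (by omega)
      rw [Nat.add_sub_cancel] at this
      rw [← add_assoc]
      exact this
  obtain ⟨i0, hi0k, hi0ne⟩ := hVne
  have hi0pos : 0 < V i0 := lt_of_le_of_ne (hVinit i0 hi0k) (Ne.symm hi0ne)
  set N0 := i0 + k with hN0
  have hkN0 : k ≤ N0 := by omega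
  -- positivity from N0 on
  have hVpos : ∀ n, N0 ≤ n → 0 < V n := by
    have hbase : 0 < V N0 := by
      have h1 : q k * V i0 ≤ V N0 := by
        rw [hVrec N0 (by omega)]
        have : N0 - k = i0 := by omega
        calc q k * V i0 = q k * V (N0 - k) := by rw [this]
          _ ≤ ∑ i ∈ Finset.Icc 1 k, q i * V (N0 - i) := by
              apply Finset.single_le_sum (f := fun i => q i * V (N0 - i))
              · intro i hi
                have hqi := hq1 i hi
                exact mul_nonneg (by linarith) (hVnonneg _)
              · exact Finset.mem_Icc.mpr ⟨by omega, le_rfl⟩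
      have hqk := hq1 k (Finset.mem_Icc.mpr ⟨by omega, le_rfl⟩)
      nlinarith
    intro n hn
    exact lt_of_lt_of_le hbase (hVmono' N0 n (by omega) hn)
  -- the normalized sequence
  set x : ℕ → ℝ := fun n => (V n : ℝ) / α ^ n with hxdef
  have hxnonneg : ∀ n, 0 ≤ x n := fun n =>
    div_nonneg (by exact_mod_cast hVnonneg n) (pow_pos hα0 n).le
  have hxpos : ∀ n, N0 ≤ n → 0 < x n := fun n hn =>
    div_pos (by exact_mod_cast hVpos n hn) (pow_pos hα0 n)
  -- weights
  set w : ℕ → ℝ := fun i => (q i : ℝ) / α ^ i with hwdef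
  have hwpos : ∀ i ∈ Finset.Icc 1 k, 0 < w i := by
    intro i hi
    have hqi := hq1 i hi
    exact div_pos (by exact_mod_cast lt_of_lt_of_le one_pos hqi) (pow_pos hα0 i)
  have hwsum : ∑ i ∈ Finset.Icc 1 k, w i = 1 := by
    have hr : ∑ i ∈ Finset.Icc 1 k, (q i : ℝ) * α ^ (k - i) = α ^ k := by linarith
    have hstep : ∀ i ∈ Finset.Icc 1 k, w i = ((q i : ℝ) * α ^ (k - i)) / α ^ k := by
      intro i hi
      have hik : i ≤ k := (Finset.mem_Icc.mp hi).2
      rw [hwdef]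
      rw [div_eq_div_iff (pow_ne_zero i hα0.ne') (pow_ne_zero k hα0.ne')]
      rw [mul_assoc, ← pow_add, Nat.sub_add_cancel hik]
    rw [Finset.sum_congr rfl hstep, ← Finset.sum_div, hr,
      div_self (pow_ne_zero k hα0.ne')]
  -- the averaging recurrence
  have hxrec : ∀ n, k ≤ n → x n = ∑ i ∈ Finset.Icc 1 k, w i * x (n - i) := by
    intro n hn
    have hcast : (V n : ℝ) = ∑ i ∈ Finset.Icc 1 k, (q i : ℝ) * (V (n - i) : ℝ) := by
      exact_mod_cast congrArg (Int.cast : ℤ → ℝ) (hVrec n hn)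
    rw [hxdef]
    simp only
    rw [hcast, Finset.sum_div]
    refine Finset.sum_congr rfl fun i hi => ?_
    have hik : i ≤ n := le_trans (Finset.mem_Icc.mp hi).2 hn
    rw [div_mul_div_comm, ← pow_add, Nat.add_sub_cancel' hik]
  -- windows
  have hk0 : (Finset.range k).Nonempty := ⟨0, Finset.mem_range.mpr (by omega)⟩
  set M : ℕ → ℝ := fun n => (Finset.range k).sup' hk0 (fun j => x (n + j)) with hMdef
  set m : ℕ → ℝ := fun n => (Finset.range k).inf' hk0 (fun j => x (n + j)) with hmdef
  -- all later terms bounded by window extremes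
  have hub : ∀ n, N0 ≤ n → ∀ t, n ≤ t → x t ≤ M n := by
    intro n hn t
    induction t using Nat.strong_induction_on with
    | _ t ih =>
      intro ht
      by_cases hlt : t < n + k
      · have h1 : x t = x (n + (t - n)) := by rw [Nat.add_sub_cancel' ht]
        rw [h1, hMdef]
        exact Finset.le_sup' (fun j => x (n + j)) (Finset.mem_range.mpr (by omega))
      · push_neg at hlt
        have hkt : k ≤ t := by omega
        rw [hxrec t hkt]
        calc ∑ i ∈ Finset.Icc 1 k, w i * x (t - i)
            ≤ ∑ i ∈ Finset.Icc 1 k, w i * M n := by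
              apply Finset.sum_le_sum
              intro i hi
              have hi' := Finset.mem_Icc.mp hi
              exact mul_le_mul_of_nonneg_left
                (ih (t - i) (by omega) (by omega)) (hwpos i hi).le
          _ = M n := by rw [← Finset.sum_mul, hwsum, one_mul]
  have hlb : ∀ n, N0 ≤ n → ∀ t, n ≤ t → m n ≤ x t := by
    intro n hn t
    induction t using Nat.strong_induction_on with
    | _ t ih =>
      intro ht
      by_cases hlt : t < n + k
      · have h1 : x t = x (n + (t - n)) := by rw [Nat.add_sub_cancel' ht]
        rw [h1, hmdef]
        exact Finset.inf'_le (fun j => x (n + j)) (Finset.mem_range.mpr (by omega))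
      · push_neg at hlt
        have hkt : k ≤ t := by omega
        rw [hxrec t hkt]
        calc m n = ∑ i ∈ Finset.Icc 1 k, w i * m n := by
              rw [← Finset.sum_mul, hwsum, one_mul]
          _ ≤ ∑ i ∈ Finset.Icc 1 k, w i * x (t - i) := by
              apply Finset.sum_le_sum
              intro i hi
              have hi' := Finset.mem_Icc.mp hi
              exact mul_le_mul_of_nonneg_left
                (ih (t - i) (by omega) (by omega)) (hwpos i hi).le
  have hManti : ∀ a b, N0 ≤ a → a ≤ b → M b ≤ M a := by
    intro a b ha hab
    rw [hMdef]
    apply Finset.sup'_le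
    intro j hj
    exact hub a ha (b + j) (by omega)
  have hmmono : ∀ a b, N0 ≤ a → a ≤ b → m a ≤ m b := by
    intro a b ha hab
    rw [hmdef]
    apply Finset.le_inf'
    intro j hj
    exact hlb a ha (b + j) (by omega)
  have hmleM : ∀ n, N0 ≤ n → m n ≤ M n := by
    intro n hn
    exact le_trans (hlb n hn n le_rfl) (hub n hn n le_rfl)
  -- the minimal weight
  set ε : ℝ := w k with hεdef
  have hε : 0 < ε := hwpos k (Finset.mem_Icc.mpr ⟨by omega, le_rfl⟩)
  have hεle : ∀ i ∈ Finset.Icc 1 k, ε ≤ w i := by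
    intro i hi
    have hi' := Finset.mem_Icc.mp hi
    have hq := hqmono i k hi'.1 hi'.2 le_rfl
    have hqi := hq1 i hi
    rw [hεdef, hwdef]
    apply div_le_div₀ (by exact_mod_cast by linarith : (0:ℝ) ≤ (q i : ℝ))
      (by exact_mod_cast hq) (pow_pos hα0 i)
      (pow_le_pow_right₀ hα1.le hi'.2)
  have hε1 : ε < 1 := by
    have hsub : ({1, k} : Finset ℕ) ⊆ Finset.Icc 1 k := by
      intro i hi
      simp only [Finset.mem_insert, Finset.mem_singleton] at hi
      rcases hi with rfl | rfl <;> exact Finset.mem_Icc.mpr ⟨by omega, by omega⟩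
    have h2 : w 1 + w k ≤ ∑ i ∈ Finset.Icc 1 k, w i := by
      rw [← Finset.sum_pair (by omega : (1:ℕ) ≠ k)]
      apply Finset.sum_le_sum_of_subset_of_nonneg hsub
      intro i hi _
      exact (hwpos i hi).le
    have hw1 : 0 < w 1 := hwpos 1 (Finset.mem_Icc.mpr ⟨le_rfl, by omega⟩)
    rw [hwsum] at h2
    rw [hεdef]; linarith
  -- contraction of the window gap
  have hcontr : ∀ n, N0 ≤ n → M (n + 2 * k) - m (n + 2 * k) ≤ (1 - ε) * (M n - m n) := by
    intro n hn
    obtain ⟨j0, hj0mem, hj0⟩ :=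
      Finset.exists_mem_eq_inf' hk0 (fun j => x (n + k + j))
    have hj0k : j0 < k := Finset.mem_range.mp hj0mem
    set t0 := n + k + j0 with ht0
    have hmval : m (n + k) = x t0 := hj0
    have hxt0leM : x t0 ≤ M n := hub n hn t0 (by omega)
    -- key step bound
    have hstep : ∀ t, t0 + 1 ≤ t → t ≤ t0 + k → x t ≤ M n - ε * (M n - m (n + k)) := by
      intro t ht1 ht2
      have hkt : k ≤ t := by omega
      have hi0mem : t - t0 ∈ Finset.Icc 1 k := Finset.mem_Icc.mpr ⟨by omega, by omega⟩
      rw [hxrec t hkt]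
      rw [← Finset.add_sum_erase _ _ hi0mem]
      have ht0eq : t - (t - t0) = t0 := by omega
      have hbound : ∑ i ∈ (Finset.Icc 1 k).erase (t - t0), w i * x (t - i)
          ≤ ∑ i ∈ (Finset.Icc 1 k).erase (t - t0), w i * M n := by
        apply Finset.sum_le_sum
        intro i hi
        have hi' := Finset.mem_Icc.mp (Finset.mem_of_mem_erase hi)
        refine mul_le_mul_of_nonneg_left ?_ (hwpos i (Finset.mem_of_mem_erase hi)).le
        exact hub n hn (t - i) (by omega)
      have hsumerase : ∑ i ∈ (Finset.Icc 1 k).erase (t - t0), w i = 1 - w (t - t0) := by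
        have := Finset.add_sum_erase _ w hi0mem
        rw [hwsum] at this
        linarith
      have hwge : ε ≤ w (t - t0) := hεle _ hi0mem
      have hgap0 : 0 ≤ M n - m (n + k) := by rw [hmval]; linarith
      calc w (t - t0) * x (t - (t - t0)) +
            ∑ i ∈ (Finset.Icc 1 k).erase (t - t0), w i * x (t - i)
          ≤ w (t - t0) * m (n + k) + (1 - w (t - t0)) * M n := by
            rw [ht0eq, ← hmval] at *
            rw [← Finset.sum_mul] at hbound
            rw [hsumerase] at hbound
            linarith
        _ = M n - w (t - t0) * (M n - m (n + k)) := by ring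
        _ ≤ M n - ε * (M n - m (n + k)) := by nlinarith
    have hM1 : M (t0 + 1) ≤ M n - ε * (M n - m (n + k)) := by
      rw [hMdef]
      apply Finset.sup'_le
      intro j hj
      have hjk := Finset.mem_range.mp hj
      exact hstep (t0 + 1 + j) (by omega) (by omega)
    have hM2 : M (n + 2 * k) ≤ M (t0 + 1) := hManti (t0 + 1) (n + 2 * k) (by omega) (by omega)
    have hm1 : m (n + k) ≤ m (n + 2 * k) := hmmono (n + k) (n + 2 * k) (by omega) (by omega)
    have hm0 : m n ≤ m (n + k) := hmmono n (n + k) hn (by omega)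
    nlinarith
  -- geometric decay of the gap
  have hgap : ∀ j : ℕ, M (N0 + 2 * k * j) - m (N0 + 2 * k * j)
      ≤ (1 - ε) ^ j * (M N0 - m N0) := by
    intro j
    induction j with
    | zero => simp
    | succ j ih =>
      have h1 := hcontr (N0 + 2 * k * j) (by omega)
      have h2 : N0 + 2 * k * (j + 1) = N0 + 2 * k * j + 2 * k := by ring
      rw [h2]
      calc M (N0 + 2 * k * j + 2 * k) - m (N0 + 2 * k * j + 2 * k)
          ≤ (1 - ε) * (M (N0 + 2 * k * j) - m (N0 + 2 * k * j)) := h1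
        _ ≤ (1 - ε) * ((1 - ε) ^ j * (M N0 - m N0)) :=
            mul_le_mul_of_nonneg_left ih (by linarith)
        _ = (1 - ε) ^ (j + 1) * (M N0 - m N0) := by ring
  -- x is Cauchy
  have hcauchy : CauchySeq x := by
    rw [Metric.cauchySeq_iff']
    intro δ hδ
    have htend : Tendsto (fun j : ℕ => (1 - ε) ^ j * (M N0 - m N0)) atTop (nhds 0) := by
      have h0 := tendsto_pow_atTop_nhds_zero_of_lt_one (by linarith : (0:ℝ) ≤ 1 - ε)
        (by linarith : 1 - ε < 1)
      simpa using h0.mul_const (M N0 - m N0)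
    obtain ⟨j, hj⟩ := (htend.eventually (gt_mem_nhds hδ)).exists
    refine ⟨N0 + 2 * k * j, fun t ht => ?_⟩
    have hN : N0 ≤ N0 + 2 * k * j := by omega
    have h1 : x t ≤ M (N0 + 2 * k * j) := hub _ hN t ht
    have h2 : m (N0 + 2 * k * j) ≤ x t := hlb _ hN t ht
    have h3 : x (N0 + 2 * k * j) ≤ M (N0 + 2 * k * j) := hub _ hN _ le_rfl
    have h4 : m (N0 + 2 * k * j) ≤ x (N0 + 2 * k * j) := hlb _ hN _ le_rfl
    have h5 := hgap j
    rw [Real.dist_eq, abs_sub_lt_iff]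
    constructor <;> linarith
  obtain ⟨L, hL⟩ := cauchySeq_tendsto_of_complete hcauchy
  have hmN0pos : 0 < m N0 := by
    rw [hmdef]
    rw [Finset.lt_inf'_iff]
    intro j hj
    exact hxpos (N0 + j) (by omega)
  have hLpos : 0 < L := by
    have hge : m N0 ≤ L := by
      apply ge_of_tendsto hL
      filter_upwards [eventually_ge_atTop N0] with t ht
      exact hlb N0 le_rfl t ht
    linarith
  -- conclude
  have hsub : Tendsto (fun n => x (n - 1)) atTop (nhds L) :=
    hL.comp (tendsto_sub_atTop_nat 1)
  have hdivL : Tendsto (fun n => x n / x (n - 1)) atTop (nhds (L / L)) :=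
    hL.div hsub hLpos.ne'
  rw [div_self hLpos.ne'] at hdivL
  have hratio : Tendsto (fun n => α * (x n / x (n - 1))) atTop (nhds α) := by
    have := (tendsto_const_nhds (x := α) (f := atTop)).mul hdivL
    simpa using this
  refine Tendsto.congr' ?_ hratio
  filter_upwards [eventually_ge_atTop (N0 + 1)] with n hn
  have hV1 : (0:ℝ) < (V (n - 1) : ℝ) := by exact_mod_cast hVpos (n - 1) (by omega)
  have hpow : α ^ n = α ^ (n - 1) * α := by
    rw [← pow_succ]
    congr 1
    omega
  rw [hxdef]
  simp only
  rw [hpow]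
  have hp : (0:ℝ) < α ^ (n - 1) := pow_pos hα0 _
  field_simp
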